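/- Let B be a subset of the closed unit Euclidean ball of ℝ^n, ε_1,…,ε_n independent Rademacher variables, and Z = sup_{b ∈ B} ⟨b, ε⟩. Then Var(Z) ≤ 2. -/

import Mathlib

open Finset MeasureTheory ProbabilityTheory

private lemma sum_cube_succ {n : ℕ} (F : (Fin (n+1) → Bool) → ℝ) :
    ∑ x, F x = ∑ y : Fin n → Bool, (F (Fin.cons false y) + F (Fin.cons true y)) := by
  rw [← (Fin.consEquiv (fun _ : Fin (n+1) => Bool)).sum_comp F]
  rw [Fintype.sum_prod_type, Fintype.sum_bool]
  rw [← Finset.sum_add_distrib]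
  congr 1; ext y; rw [add_comm]; rfl

private lemma efron_stein_sym (n : ℕ) (g : (Fin n → Bool) → ℝ) :
    4 * 2^n * ∑ x, g x ^ 2 - 4 * (∑ x, g x)^2
      ≤ 2^n * ∑ i, ∑ x, (g x - g (Function.update x i (!x i)))^2 := by
  induction n with
  | zero =>
    simp [Fintype.sum_subsingleton _ (fun _ : Fin 0 => false)]
  | succ n IH =>
    set g0 : (Fin n → Bool) → ℝ := fun y => g (Fin.cons false y) with hg0
    set g1 : (Fin n → Bool) → ℝ := fun y => g (Fin.cons true y) with hg1
    have hsum : ∑ x, g x = ∑ y, g0 y + ∑ y, g1 y := by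
      rw [sum_cube_succ g, Finset.sum_add_distrib]
    have hsq : ∑ x, g x ^ 2 = ∑ y, g0 y ^ 2 + ∑ y, g1 y ^ 2 := by
      rw [sum_cube_succ (fun x => g x ^ 2), Finset.sum_add_distrib]
    -- flip at coordinate 0
    have h0 : ∑ x, (g x - g (Function.update x 0 (!x 0)))^2
        = 2 * ∑ y, (g0 y - g1 y)^2 := by
      rw [sum_cube_succ (fun x => (g x - g (Function.update x 0 (!x 0)))^2)]
      have e1 : ∀ y : Fin n → Bool,
          (Function.update (Fin.cons false y : Fin (n+1) → Bool) (0 : Fin (n+1)) (!((Fin.cons false y : Fin (n+1) → Bool) 0))) = (Fin.cons true y : Fin (n+1) → Bool) := by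
        intro y; simp [Fin.update_cons_zero]
      have e2 : ∀ y : Fin n → Bool,
          (Function.update (Fin.cons true y : Fin (n+1) → Bool) (0 : Fin (n+1)) (!((Fin.cons true y : Fin (n+1) → Bool) 0))) = (Fin.cons false y : Fin (n+1) → Bool) := by
        intro y; simp [Fin.update_cons_zero]
      simp only [e1, e2]
      rw [Finset.mul_sum]
      refine Finset.sum_congr rfl fun y _ => ?_
      simp only [hg0, hg1]; ring
    -- flip at coordinate i.succ
    have hsucc : ∀ i : Fin n, ∑ x, (g x - g (Function.update x i.succ (!x i.succ)))^2
        = ∑ y, (g0 y - g0 (Function.update y i (!y i)))^2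
          + ∑ y, (g1 y - g1 (Function.update y i (!y i)))^2 := by
      intro i
      rw [sum_cube_succ (fun x => (g x - g (Function.update x i.succ (!x i.succ)))^2)]
      rw [← Finset.sum_add_distrib]
      congr 1; ext y
      have e1 : ∀ b, (Function.update (Fin.cons b y : Fin (n+1) → Bool) i.succ (!((Fin.cons b y : Fin (n+1) → Bool) i.succ)))
          = (Fin.cons b (Function.update y i (!y i)) : Fin (n+1) → Bool) := by
        intro b
        rw [Fin.cons_succ]
        exact (Fin.cons_update (α := fun _ : Fin (n+1) => Bool) b y i (!y i)).symm
      rw [e1 false, e1 true]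
    have key := IH (fun y => g0 y + g1 y)
    have hptwise : ∀ (i : Fin n) (y : Fin n → Bool),
        ((g0 y + g1 y) - (g0 (Function.update y i (!y i)) + g1 (Function.update y i (!y i))))^2
          ≤ 2 * (g0 y - g0 (Function.update y i (!y i)))^2
            + 2 * (g1 y - g1 (Function.update y i (!y i)))^2 := by
      intro i y; nlinarith [sq_nonneg ((g0 y - g0 (Function.update y i (!y i))) - (g1 y - g1 (Function.update y i (!y i))))]
    have hDle : ∑ i, ∑ y, ((g0 y + g1 y) - (g0 (Function.update y i (!y i)) + g1 (Function.update y i (!y i))))^2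
        ≤ ∑ i, (2 * ∑ y, (g0 y - g0 (Function.update y i (!y i)))^2
            + 2 * ∑ y, (g1 y - g1 (Function.update y i (!y i)))^2) := by
      refine Finset.sum_le_sum fun i _ => ?_
      rw [Finset.mul_sum, Finset.mul_sum, ← Finset.sum_add_distrib]
      exact Finset.sum_le_sum fun y _ => hptwise i y
    have hid : ∑ y, (g0 y + g1 y)^2 + ∑ y, (g0 y - g1 y)^2
        = 2 * (∑ y, g0 y ^ 2 + ∑ y, g1 y ^ 2) := by
      rw [← Finset.sum_add_distrib]
      rw [mul_add, Finset.mul_sum, Finset.mul_sum, ← Finset.sum_add_distrib]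
      congr 1; ext y; ring
    rw [Fin.sum_univ_succ]
    simp only [hsucc, h0, hsum, hsq]
    have h2n : (0:ℝ) < 2^n := by positivity
    have key' : 4 * 2^n * ∑ y, (g0 y + g1 y)^2 - 4 * (∑ y, g0 y + ∑ y, g1 y)^2
        ≤ 2^n * ∑ i, ∑ y, ((g0 y + g1 y) - (g0 (Function.update y i (!y i)) + g1 (Function.update y i (!y i))))^2 := by
      have h := key
      rw [show (∑ y, ((fun y => g0 y + g1 y) y)) = ∑ y, g0 y + ∑ y, g1 y from Finset.sum_add_distrib] at h
      simpa using h
    have expand : ∑ i : Fin n, (2 * ∑ y, (g0 y - g0 (Function.update y i (!y i)))^2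
            + 2 * ∑ y, (g1 y - g1 (Function.update y i (!y i)))^2)
        = 2 * ∑ i : Fin n, (∑ y, (g0 y - g0 (Function.update y i (!y i)))^2
            + ∑ y, (g1 y - g1 (Function.update y i (!y i)))^2) := by
      rw [Finset.mul_sum]; congr 1; ext i; ring
    rw [pow_succ]
    nlinarith [mul_le_mul_of_nonneg_left (le_trans (le_of_le_of_eq hDle expand) (le_refl _)) (le_of_lt h2n), key'.trans (mul_le_mul_of_nonneg_left hDle (le_of_lt h2n))]

private lemma flip_involutive {n : ℕ} (i : Fin n) :
    Function.Involutive (fun x : Fin n → Bool => Function.update x i (!x i)) := by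
  intro x
  ext j
  rcases eq_or_ne j i with rfl | hj
  · simp
  · simp [Function.update_of_ne hj]

private lemma sq_eq_posPart {a : ℝ} : a^2 = (max a 0)^2 + (max (-a) 0)^2 := by
  rcases le_total a 0 with h | h
  · rw [max_eq_right h, max_eq_left (by linarith)]; ring
  · rw [max_eq_left h, max_eq_right (by linarith)]; ring

private lemma sum_sq_eq_two_pos {n : ℕ} (g : (Fin n → Bool) → ℝ) (i : Fin n) :
    ∑ x, (g x - g (Function.update x i (!x i)))^2
      = 2 * ∑ x, (max (g x - g (Function.update x i (!x i))) 0)^2 := by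
  have hinv := flip_involutive (n := n) i
  have h1 : ∑ x, (max (-(g x - g (Function.update x i (!x i)))) 0)^2
      = ∑ x, (max (g x - g (Function.update x i (!x i))) 0)^2 := by
    rw [← Equiv.sum_comp hinv.toPerm
      (fun x => (max (g x - g (Function.update x i (!x i))) 0)^2)]
    refine Finset.sum_congr rfl fun x _ => ?_
    have hxx : Function.update (Function.update x i (!x i)) i
        (!(Function.update x i (!x i)) i) = x := hinv x
    simp only [Function.Involutive.coe_toPerm]
    rw [hxx]
    ring_nf
  calc ∑ x, (g x - g (Function.update x i (!x i)))^2
      = ∑ x, ((max (g x - g (Function.update x i (!x i))) 0)^2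
          + (max (-(g x - g (Function.update x i (!x i)))) 0)^2) := by
        refine Finset.sum_congr rfl fun x _ => sq_eq_posPart
    _ = 2 * ∑ x, (max (g x - g (Function.update x i (!x i))) 0)^2 := by
        rw [Finset.sum_add_distrib, h1]; ring

private lemma discrete_var_le {n : ℕ} (g : (Fin n → Bool) → ℝ)
    (hg : ∀ x, ∑ i, (max (g x - g (Function.update x i (!x i))) 0)^2 ≤ 4) :
    (2:ℝ)^n * ∑ x, g x ^ 2 - (∑ x, g x)^2 ≤ 2 * 4^n := by
  have h1 := efron_stein_sym n g
  have h2 : ∑ i, ∑ x, (g x - g (Function.update x i (!x i)))^2 ≤ 8 * 2^n := by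
    calc ∑ i, ∑ x, (g x - g (Function.update x i (!x i)))^2
        = 2 * ∑ x : Fin n → Bool, ∑ i, (max (g x - g (Function.update x i (!x i))) 0)^2 := by
          rw [Finset.sum_comm (γ := Fin n → Bool), Finset.mul_sum]
          exact Finset.sum_congr rfl fun i _ => sum_sq_eq_two_pos g i
      _ ≤ 2 * ∑ _x : Fin n → Bool, (4:ℝ) := by
          have := Finset.sum_le_sum (fun x (_ : x ∈ Finset.univ) => hg x)
          linarith
      _ = 8 * 2^n := by
          rw [Finset.sum_const, Finset.card_univ]
          simp [Fintype.card_fun]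
          ring
  have h2n : (0:ℝ) < 2^n := by positivity
  have h4 : (4:ℝ)^n = (2^n)^2 := by rw [← pow_mul, mul_comm, pow_mul]; norm_num
  nlinarith [mul_le_mul_of_nonneg_left h2 (le_of_lt h2n)]

open MeasureTheory ProbabilityTheory

private lemma variance_congr_ae {Ω : Type*} [MeasurableSpace Ω] {P : Measure Ω} {X Y : Ω → ℝ}
    (h : X =ᵐ[P] Y) : variance X P = variance Y P := by
  unfold ProbabilityTheory.variance ProbabilityTheory.evariance
  rw [integral_congr_ae h]
  exact congrArg ENNReal.toReal (lintegral_congr_ae (h.mono fun ω hω => by simp only [hω]))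

/-- The variance of the supremum of a Rademacher process over a subset of the
closed unit Euclidean ball is at most `2`. -/
theorem rademacher_sup_variance_le_two {n : ℕ}
    {Ω : Type*} [MeasurableSpace Ω] (P : Measure Ω) [IsProbabilityMeasure P]
    (ε : Fin n → Ω → ℝ) (hmeas : ∀ i, Measurable (ε i))
    (hind : iIndepFun ε P)
    (hrad : ∀ i, P {ω | ε i ω = 1} = 1/2 ∧ P {ω | ε i ω = -1} = 1/2)
    (B : Set (Fin n → ℝ)) (hBne : B.Nonempty) (hBcomp : IsCompact B)
    (hB : ∀ b ∈ B, ∑ i, (b i) ^ 2 ≤ 1)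
    (Z : Ω → ℝ) (hZ : ∀ ω, Z ω = ⨆ b : B, ∑ i, (b : Fin n → ℝ) i * ε i ω) :
    variance Z P ≤ 2 := by
  classical
  haveI : Nonempty B := hBne.to_subtype
  set f : (Fin n → ℝ) → ℝ := fun x => ⨆ b : B, ∑ i, (b : Fin n → ℝ) i * x i with hf
  set pt : (Fin n → Bool) → Fin n → ℝ := fun t i => if t i then 1 else -1 with hpt
  set g : (Fin n → Bool) → ℝ := fun t => f (pt t) with hgdef
  set s : Ω → Fin n → Bool := fun ω i => if ε i ω = 1 then true else false with hs
  have hcont : ∀ x : Fin n → ℝ, Continuous fun b : Fin n → ℝ => ∑ i, b i * x i := by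
    intro x
    exact continuous_finset_sum _ fun i _ => (continuous_apply i).mul continuous_const
  have hbdd : ∀ x : Fin n → ℝ,
      BddAbove (Set.range fun b : B => ∑ i, (b : Fin n → ℝ) i * x i) := by
    intro x
    have hr : Set.range (fun b : B => ∑ i, (b : Fin n → ℝ) i * x i)
        = (fun b : Fin n → ℝ => ∑ i, b i * x i) '' B := by
      rw [show (fun b : B => ∑ i, (b : Fin n → ℝ) i * x i)
          = (fun b : Fin n → ℝ => ∑ i, b i * x i) ∘ (Subtype.val) from rfl,
        Set.range_comp, Subtype.range_coe]
    rw [hr]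
    exact (hBcomp.image (hcont x)).bddAbove
  -- the key coordinate-difference bound
  have hg4 : ∀ t, ∑ i, (max (g t - g (Function.update t i (!t i))) 0)^2 ≤ 4 := by
    intro t
    obtain ⟨b₀, hb₀B, hb₀max⟩ :=
      hBcomp.exists_isMaxOn hBne (hcont (pt t)).continuousOn
    have hkey : ∀ i, (max (g t - g (Function.update t i (!t i))) 0)^2 ≤ 4 * (b₀ i)^2 := by
      intro i
      set t' := Function.update t i (!t i) with ht'
      have h1 : g t ≤ ∑ j, b₀ j * pt t j := by
        refine ciSup_le fun b => hb₀max b.2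
      have h2 : ∑ j, b₀ j * pt t' j ≤ g t' := le_ciSup (hbdd (pt t')) ⟨b₀, hb₀B⟩
      have hsum : ∑ j, b₀ j * pt t j - ∑ j, b₀ j * pt t' j
          = b₀ i * (pt t i - pt t' i) := by
        rw [← Finset.sum_sub_distrib, Finset.sum_eq_single i]
        · ring
        · intro j _ hj
          have hjj : t' j = t j := Function.update_of_ne hj _ _
          simp [hpt, hjj]
        · simp
      have hptdiff : |pt t i - pt t' i| = 2 := by
        have hti : t' i = !t i := Function.update_self _ _ _
        cases h : t i <;> simp [hpt, hti, h] <;> norm_num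
      have hd : g t - g t' ≤ |b₀ i| * 2 := by
        have habs : b₀ i * (pt t i - pt t' i) ≤ |b₀ i| * 2 := by
          calc b₀ i * (pt t i - pt t' i) ≤ |b₀ i * (pt t i - pt t' i)| := le_abs_self _
            _ = |b₀ i| * |pt t i - pt t' i| := abs_mul _ _
            _ = |b₀ i| * 2 := by rw [hptdiff]
        linarith
      have hm0 : max (g t - g t') 0 ≤ |b₀ i| * 2 := max_le hd (by positivity)
      calc (max (g t - g t') 0)^2 ≤ (|b₀ i| * 2)^2 := by
            have h0 : (0:ℝ) ≤ max (g t - g t') 0 := le_max_right _ _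
            nlinarith
        _ = 4 * (b₀ i)^2 := by rw [mul_pow, sq_abs]; ring
    calc ∑ i, (max (g t - g (Function.update t i (!t i))) 0)^2
        ≤ ∑ i, 4 * (b₀ i)^2 := Finset.sum_le_sum fun i _ => hkey i
      _ = 4 * ∑ i, (b₀ i)^2 := by rw [Finset.mul_sum]
      _ ≤ 4 := by have := hB b₀ hb₀B; linarith
  -- measurability of s
  have hsmeas : Measurable s := by
    rw [hs]
    refine measurable_pi_lambda _ fun i => ?_
    have houter : Measurable (fun r : ℝ => if r = 1 then true else false) := by
      refine Measurable.ite ?_ measurable_const measurable_const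
      simp only [Set.setOf_eq_eq_singleton]; exact measurableSet_singleton (1 : ℝ)
    exact houter.comp (hmeas i)
  -- distribution of s
  have hst : ∀ t, P (s ⁻¹' {t}) = (1/2 : ENNReal)^n := by
    intro t
    have hset : s ⁻¹' {t}
        = ⋂ i, (if t i then ε i ⁻¹' {1} else ε i ⁻¹' ({1}ᶜ)) := by
      ext ω
      simp only [Set.mem_preimage, Set.mem_singleton_iff, Set.mem_iInter, funext_iff]
      refine forall_congr' fun i => ?_
      by_cases hε : ε i ω = 1 <;> cases h : t i <;> simp [hs, hε, h]
    rw [hset, hind.meas_iInter ?_]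
    · have hval : ∀ i, P (if t i then ε i ⁻¹' {1} else ε i ⁻¹' ({1}ᶜ)) = 1/2 := by
        intro i
        obtain ⟨h1, h2⟩ := hrad i
        have hone : ε i ⁻¹' {1} = {ω | ε i ω = 1} := rfl
        cases h : t i
        · simp only [h, Bool.false_eq_true, if_false]
          rw [show ε i ⁻¹' ({1}ᶜ : Set ℝ) = (ε i ⁻¹' {1})ᶜ from rfl,
            measure_compl (hmeas i (measurableSet_singleton 1)) (measure_ne_top _ _),
            measure_univ, hone, h1]
          rw [ENNReal.sub_half ENNReal.one_ne_top]
        · simp only [h, if_true]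
          rw [hone, h1]
      rw [Finset.prod_congr rfl (fun i _ => hval i), Finset.prod_const, Finset.card_univ,
        Fintype.card_fin]
    · intro i
      cases h : t i
      · refine ⟨{1}ᶜ, (measurableSet_singleton 1).compl, ?_⟩
        simp [h]
      · refine ⟨{1}, measurableSet_singleton 1, ?_⟩
        simp [h]
  -- a.e. identification of Z with g ∘ s
  have hae : Z =ᵐ[P] fun ω => g (s ω) := by
    have hA : ∀ i, ∀ᵐ ω ∂P, ε i ω = 1 ∨ ε i ω = -1 := by
      intro i
      obtain ⟨h1, h2⟩ := hrad i
      rw [ae_iff]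
      have hm1 : MeasurableSet {ω | ε i ω = 1} := hmeas i (measurableSet_singleton 1)
      have hm2 : MeasurableSet {ω | ε i ω = -1} := hmeas i (measurableSet_singleton (-1))
      have hsetc : {ω | ¬(ε i ω = 1 ∨ ε i ω = -1)}
          = ({ω | ε i ω = 1} ∪ {ω | ε i ω = -1})ᶜ := by
        ext ω; simp [not_or]
      have hdisj : Disjoint {ω | ε i ω = 1} {ω | ε i ω = -1} := by
        rw [Set.disjoint_left]
        rintro ω hω1 hω2
        simp only [Set.mem_setOf_eq] at hω1 hω2
        rw [hω1] at hω2; norm_num at hω2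
      have hu : P ({ω | ε i ω = 1} ∪ {ω | ε i ω = -1}) = 1 := by
        rw [measure_union hdisj hm2, h1, h2, ENNReal.div_add_div_same,
          show (1+1 : ENNReal) = 2 from one_add_one_eq_two,
          ENNReal.div_self two_ne_zero ENNReal.ofNat_ne_top]
      rw [hsetc, measure_compl (hm1.union hm2) (measure_ne_top _ _), measure_univ, hu,
        tsub_self]
    have hAall : ∀ᵐ ω ∂P, ∀ i, ε i ω = 1 ∨ ε i ω = -1 := ae_all_iff.2 hA
    filter_upwards [hAall] with ω hω
    have hepspt : (fun i => ε i ω) = pt (s ω) := by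
      funext i
      have hps : pt (s ω) i
          = if (if ε i ω = 1 then true else false) = true then (1:ℝ) else -1 := rfl
      rcases hω i with h | h
      · rw [hps]; simp [h]
      · have hne : ε i ω ≠ 1 := by rw [h]; norm_num
        rw [hps, h]; norm_num
    rw [hZ ω]
    show (⨆ b : B, ∑ i, (b : Fin n → ℝ) i * ε i ω)
        = ⨆ b : B, ∑ i, (b : Fin n → ℝ) i * pt (s ω) i
    rw [← hepspt]
  -- transfer the variance computation
  have hgm : Measurable g := measurable_of_countable g
  have hY : Measurable fun ω => g (s ω) := hgm.comp hsmeas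
  obtain ⟨C, hC⟩ : ∃ C : ℝ, ∀ t, ‖g t‖ ≤ C := by
    refine ⟨∑ t, ‖g t‖, fun t => ?_⟩
    exact Finset.single_le_sum (f := fun t => ‖g t‖) (fun _ _ => norm_nonneg _)
      (Finset.mem_univ t)
  have hmem : MemLp (fun ω => g (s ω)) 2 P :=
    MemLp.of_bound hY.aestronglyMeasurable C (ae_of_all _ fun ω => hC (s ω))
  rw [variance_congr_ae hae, variance_eq_sub hmem]
  -- compute the integrals via the pushforward
  have hmap : ∀ F : (Fin n → Bool) → ℝ,
      ∫ ω, F (s ω) ∂P = ∑ t, ((1:ℝ)/2)^n * F t := by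
    intro F
    haveI : IsProbabilityMeasure (Measure.map s P) :=
      Measure.isProbabilityMeasure_map hsmeas.aemeasurable
    rw [← integral_map hsmeas.aemeasurable (measurable_of_countable F).aestronglyMeasurable,
      integral_fintype (Integrable.of_finite)]
    refine Finset.sum_congr rfl fun t _ => ?_
    rw [measureReal_def, Measure.map_apply hsmeas (measurableSet_singleton t), hst t, smul_eq_mul]
    congr 1
    rw [ENNReal.toReal_pow]
    congr 1
    simp
  have hE1 : (∫ ω, (fun ω => g (s ω)) ω ∂P) = ((1:ℝ)/2)^n * ∑ t, g t := by
    rw [show (∫ ω, (fun ω => g (s ω)) ω ∂P) = ∫ ω, g (s ω) ∂P from rfl, hmap g,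
      Finset.mul_sum]
  have hE2 : (∫ ω, ((fun ω => g (s ω))^2) ω ∂P) = ((1:ℝ)/2)^n * ∑ t, g t ^ 2 := by
    have : ∀ ω, ((fun ω => g (s ω))^2) ω = (fun t => g t ^ 2) (s ω) := fun ω => rfl
    rw [show (∫ ω, ((fun ω => g (s ω))^2) ω ∂P) = ∫ ω, (fun t => g t ^ 2) (s ω) ∂P from
      integral_congr_ae (ae_of_all _ this), hmap (fun t => g t ^ 2), Finset.mul_sum]
  rw [show (P[(fun ω => g (s ω)) ^ 2] : ℝ) = ((1:ℝ)/2)^n * ∑ t, g t ^ 2 from hE2,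
    show (P[fun ω => g (s ω)] : ℝ) = ((1:ℝ)/2)^n * ∑ t, g t from hE1]
  -- final arithmetic using the discrete Efron–Stein bound
  have hdisc := discrete_var_le g hg4
  have hN : (0:ℝ) < 2^n := by positivity
  have hcN : ((1:ℝ)/2)^n * 2^n = 1 := by
    rw [div_pow, one_pow, div_mul_eq_mul_div, one_mul, div_self (ne_of_gt hN)]
  have hc0 : (0:ℝ) < ((1:ℝ)/2)^n := by positivity
  have h4 : (4:ℝ)^n = 2^n * 2^n := by
    rw [show (4:ℝ) = 2 * 2 by norm_num, mul_pow]
  rw [h4] at hdisc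
  nlinarith [mul_le_mul_of_nonneg_left hdisc (mul_nonneg hc0.le hc0.le), sq_nonneg (((1:ℝ)/2)^n)]
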